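/- Let a, b ∈ ZMod r, not both zero, and set α := a − b·ω ∈ F (a, b viewed in F via the algebra map). Then Tr(α^{2(r−1)}) − Tr(α^{r−1}) = −9·a·(a+b)·b²·((a² + a·b + b²)²)⁻¹ in ZMod r. -/

import Mathlib

open Finset

/-- For `a, b ∈ ZMod r` not both zero and `α = a − b·ω` (where `ω² + ω + 1 = 0` in `F`),
`Tr(α^{2(r−1)}) − Tr(α^{r−1}) = −9a(a+b)b²·((a² + ab + b²)²)⁻¹`. -/
theorem stmt6 (r : ℕ) (hr : r.Prime) (hodd : Odd r) (h3 : r % 3 = 2)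
    (F : Type*) [Field F] [Fintype F] [Algebra (ZMod r) F]
    (hcard : Fintype.card F = r ^ 2)
    (ω : F) (hω : ω ^ 2 + ω + 1 = 0)
    (a b : ZMod r) (hab : ¬(a = 0 ∧ b = 0))
    (α : F) (hα : α = algebraMap (ZMod r) F a - algebraMap (ZMod r) F b * ω) :
    Algebra.trace (ZMod r) F (α ^ (2 * (r - 1))) - Algebra.trace (ZMod r) F (α ^ (r - 1)) =
      -9 * a * (a + b) * b ^ 2 * ((a ^ 2 + a * b + b ^ 2) ^ 2)⁻¹ := by
  haveI : Fact r.Prime := ⟨hr⟩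
  have hr2 : 2 ≤ r := hr.two_le
  have hrinj : Function.Injective (algebraMap (ZMod r) F) := (algebraMap (ZMod r) F).injective
  -- no root of x^2+x+1 in ZMod r
  have hA : ∀ x : ZMod r, x ^ 2 + x + 1 ≠ 0 := by
    intro x hx
    have hr3 : r ≠ 3 := by omega
    have hx1 : x ≠ 1 := by
      rintro rfl
      have h30 : ((3 : ℕ) : ZMod r) = 0 := by push_cast; linear_combination hx
      have := (ZMod.natCast_eq_zero_iff 3 r).mp h30
      have := (Nat.prime_dvd_prime_iff_eq hr (by norm_num)).mp this
      omega
    have hx0 : x ≠ 0 := by rintro rfl; norm_num at hx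
    have h1 : x ^ 3 = 1 := by linear_combination (x - 1) * hx
    have h2 : x ^ (r - 1) = 1 := ZMod.pow_card_sub_one_eq_one hx0
    have d1 : orderOf x ∣ 3 := orderOf_dvd_of_pow_eq_one h1
    have d2 : orderOf x ∣ r - 1 := orderOf_dvd_of_pow_eq_one h2
    rcases (Nat.Prime.eq_one_or_self_of_dvd (by norm_num) _ d1) with h | h
    · exact hx1 (orderOf_eq_one_iff.mp h)
    · rw [h] at d2
      obtain ⟨k, hk⟩ := d2
      omega
  have hωnb : ∀ c : ZMod r, ω ≠ algebraMap (ZMod r) F c := by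
    intro c hc
    apply hA c
    apply hrinj
    rw [map_add, map_add, map_pow, map_one, map_zero, ← hc]
    exact hω
  have hω0 : ω ≠ 0 := by intro h; rw [h] at hω; norm_num at hω
  -- basis {1, ω}
  have hfin : Module.finrank (ZMod r) F = 2 := by
    have := Module.card_eq_pow_finrank (K := ZMod r) (V := F)
    rw [ZMod.card, hcard] at this
    exact Nat.pow_right_injective hr2 this.symm
  have li : LinearIndependent (ZMod r) ![(1 : F), ω] := by
    rw [linearIndependent_fin2]
    refine ⟨by simpa using hω0, ?_⟩
    intro c hc
    simp only [Matrix.cons_val_one, Matrix.head_cons, Matrix.cons_val_zero] at hc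
    rw [Algebra.smul_def] at hc
    apply hωnb c⁻¹
    rw [map_inv₀]
    exact eq_inv_of_mul_eq_one_left (by linear_combination hc)
  have hcard2 : Fintype.card (Fin 2) = Module.finrank (ZMod r) F := by simp [hfin]
  let B : Module.Basis (Fin 2) (ZMod r) F := basisOfLinearIndependentOfCardEqFinrank li hcard2
  have hB : ⇑B = ![(1 : F), ω] := coe_basisOfLinearIndependentOfCardEqFinrank li hcard2
  have e0 : B 0 = 1 := by rw [hB]; rfl
  have e1 : B 1 = ω := by rw [hB]; rfl
  classical
  -- trace of ω
  have htrω : Algebra.trace (ZMod r) F ω = -1 := by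
    rw [Algebra.trace_eq_matrix_trace B, Matrix.trace_fin_two,
      Algebra.leftMulMatrix_eq_repr_mul, Algebra.leftMulMatrix_eq_repr_mul]
    have r1 : ω * B 0 = (0 : ZMod r) • B 0 + (1 : ZMod r) • B 1 := by rw [e0, e1]; simp
    have r2 : ω * B 1 = (-1 : ZMod r) • B 0 + (-1 : ZMod r) • B 1 := by
      rw [e0, e1, Algebra.smul_def, Algebra.smul_def]
      simp only [map_neg, map_one]
      linear_combination hω
    rw [r1, r2]
    simp [Finsupp.single_apply]
  have htr1 : Algebra.trace (ZMod r) F 1 = 2 := by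
    have := Algebra.trace_algebraMap_of_basis B (1 : ZMod r)
    rw [map_one] at this
    rw [this]
    simp
  -- char and Frobenius facts
  haveI : CharP F r := charP_of_injective_algebraMap hrinj r
  have hc : ∀ c : ZMod r, (algebraMap (ZMod r) F c) ^ r = algebraMap (ZMod r) F c := by
    intro c; rw [← map_pow, ZMod.pow_card]
  have hω3 : ω ^ 3 = 1 := by linear_combination (ω - 1) * hω
  have hωr : ω ^ r = ω ^ 2 := by
    conv_lhs => rw [show r = 3 * (r / 3) + 2 by omega]
    rw [pow_add, pow_mul, hω3, one_pow, one_mul]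
  -- trace formula
  have htr : ∀ x : F, algebraMap (ZMod r) F (Algebra.trace (ZMod r) F x) = x + x ^ r := by
    intro x
    have hx := B.sum_repr x
    rw [Fin.sum_univ_two, e0, e1] at hx
    set c := B.repr x 0 with hcdef
    set d := B.repr x 1 with hddef
    have hx' : x = algebraMap (ZMod r) F c + algebraMap (ZMod r) F d * ω := by
      rw [← hx, Algebra.smul_def, Algebra.smul_def, mul_one]
    have ht : Algebra.trace (ZMod r) F x = 2 * c - d := by
      rw [← hx, map_add, map_smul, map_smul, htr1, htrω]
      ring_nf
    rw [ht, hx', add_pow_char, mul_pow, hc, hc, hωr]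
    rw [map_sub, map_mul, map_ofNat]
    linear_combination (-(algebraMap (ZMod r) F d)) * hω
  -- Frobenius of α
  have hβ : α ^ r = algebraMap (ZMod r) F (a + b) + algebraMap (ZMod r) F b * ω := by
    rw [hα, sub_pow_char, mul_pow, hc, hc, hωr, map_add]
    linear_combination (-(algebraMap (ZMod r) F b)) * hω
  -- α ≠ 0
  have hα0 : α ≠ 0 := by
    intro h
    rw [hα, sub_eq_zero] at h
    by_cases hb : b = 0
    · rw [hb, map_zero, zero_mul] at h
      exact hab ⟨hrinj (by rw [h, map_zero]), hb⟩
    · apply hωnb (a * b⁻¹)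
      have hb0 : algebraMap (ZMod r) F b ≠ 0 := fun hh => hb (hrinj (by rw [hh, map_zero]))
      rw [map_mul, map_inv₀]
      field_simp
      linear_combination -h
  have hβ0 : α ^ r ≠ 0 := pow_ne_zero _ hα0
  -- norm and trace of α
  have hN : α * α ^ r = algebraMap (ZMod r) F (a ^ 2 + a * b + b ^ 2) := by
    rw [hβ, hα]
    simp only [map_add, map_mul, map_pow]
    linear_combination (-(algebraMap (ZMod r) F b) ^ 2) * hω
  have hN0 : a ^ 2 + a * b + b ^ 2 ≠ 0 := by
    intro h
    apply mul_ne_zero hα0 hβ0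
    rw [hN, h, map_zero]
  have hs : α + α ^ r = 2 * algebraMap (ZMod r) F a + algebraMap (ZMod r) F b := by
    rw [hβ, hα]
    simp only [map_add]
    ring
  have hαr2 : (α ^ r) ^ r = α := by
    rw [← pow_mul, ← sq, ← hcard]
    exact FiniteField.pow_card α
  -- key power identities
  have hA1 : α ^ (r - 1) * α = α ^ r := by
    rw [← pow_succ]; congr 1; omega
  have hB1 : (α ^ r) ^ (r - 1) * α ^ r = α := by
    rw [← pow_succ, show r - 1 + 1 = r by omega]
    exact hαr2
  set N := a ^ 2 + a * b + b ^ 2 with hNdef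
  set T1 := Algebra.trace (ZMod r) F (α ^ (r - 1)) with hT1def
  set T2 := Algebra.trace (ZMod r) F (α ^ (2 * (r - 1))) with hT2def
  have h1 : algebraMap (ZMod r) F T1 = α ^ (r - 1) + (α ^ r) ^ (r - 1) := by
    rw [hT1def, htr, ← pow_right_comm]
  have hpow : α ^ (2 * (r - 1)) = (α ^ (r - 1)) ^ 2 := by
    rw [← pow_mul]; congr 1; ring
  have h2 : algebraMap (ZMod r) F T2 = (α ^ (r - 1)) ^ 2 + ((α ^ r) ^ (r - 1)) ^ 2 := by
    rw [hT2def, hpow, htr, pow_right_comm _ 2 r, pow_right_comm α (r - 1) r]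
  have hT1 : T1 * N = (2 * a + b) ^ 2 - 2 * N := by
    apply hrinj
    simp only [map_mul, map_sub, map_pow, map_add, map_ofNat]
    rw [h1, ← hN, ← hs]
    linear_combination (α ^ r) * hA1 + α * hB1
  have hT2 : T2 * N ^ 2 = (2 * a + b) ^ 4 - 4 * (2 * a + b) ^ 2 * N + 2 * N ^ 2 := by
    apply hrinj
    simp only [map_mul, map_sub, map_add, map_pow, map_ofNat]
    rw [h2, ← hN, ← hs]
    linear_combination (α ^ (r - 1) * α + α ^ r) * (α ^ r) ^ 2 * hA1 +
      ((α ^ r) ^ (r - 1) * α ^ r + α) * α ^ 2 * hB1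
  -- finish
  have hN2 : N ^ 2 ≠ 0 := pow_ne_zero _ hN0
  rw [eq_mul_inv_iff_mul_eq₀ hN2]
  linear_combination hT2 - N * hT1
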